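/- Let D ≥ 3 and m ≥ 1 be integers, G a bipartite graph with parts V₁, V₂, and H ⊆ G a subgraph with Δ(H) ≤ D. Suppose there exist x ∈ V(H) and y ∈ N_G(x) ∖ V(H) such that H + xy is (D,m)-bipartite-extendable. Then H is (D,m)-bipartite-extendable. -/
import Mathlib


open Finset
open scoped Classical
noncomputable section

/-- The external neighborhood of `U` in `G`: vertices outside `U` with a neighbor in `U`. -/
def extNbhd {V : Type*} [Fintype V] (G : SimpleGraph V) (U : Finset V) : Finset V :=
  Finset.univ.filter (fun v => v ∉ U ∧ ∃ u ∈ U, G.Adj u v)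

/-- The vertex set `V(H)` of a subgraph `H`, i.e. the vertices incident to an edge of `H`. -/
def supportF {V : Type*} [Fintype V] (H : SimpleGraph V) : Finset V :=
  Finset.univ.filter (fun v => ∃ u, H.Adj v u)

/-- `H` is `(D,m)`-bipartite-extendable in `G` with parts `V₁, V₂`:
`Δ(H) ≤ D` and for every `U ⊆ Vᵢ` with `|U| ≤ 2m`,
`|N_G(U) ∖ V(H)| ≥ (D−1)|U| − Σ_{x ∈ U ∩ V(H)} (d_H(x) − 1)`. -/
def BipExtendable {V : Type*} [Fintype V] (G H : SimpleGraph V) (V₁ V₂ : Finset V)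
    (D m : ℕ) : Prop :=
  (∀ v, H.degree v ≤ D) ∧
  ∀ U : Finset V, (U ⊆ V₁ ∨ U ⊆ V₂) → U.card ≤ 2 * m →
    ((D : ℤ) - 1) * U.card - ∑ x ∈ U ∩ supportF H, ((H.degree x : ℤ) - 1)
      ≤ (((extNbhd G U) \ supportF H).card : ℤ)

theorem stmt_13_aux {V : Type*} [Fintype V] (G H : SimpleGraph V)
    (V₁ V₂ : Finset V) (D m : ℕ) (hD : 3 ≤ D) (hm : 1 ≤ m)
    (hdisj : Disjoint V₁ V₂)
    (hbip : ∀ u v : V, G.Adj u v → (u ∈ V₁ ∧ v ∈ V₂) ∨ (u ∈ V₂ ∧ v ∈ V₁))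
    (hHG : H ≤ G) (hΔ : ∀ v, H.degree v ≤ D)
    (x y : V) (hx : x ∈ supportF H) (hy : y ∉ supportF H) (hxy : G.Adj x y)
    (hext : BipExtendable G (H ⊔ SimpleGraph.fromEdgeSet {s(x, y)}) V₁ V₂ D m) :
    BipExtendable G H V₁ V₂ D m := by
  classical
  obtain ⟨H', hH'⟩ : ∃ H'', H'' = H ⊔ SimpleGraph.fromEdgeSet {s(x, y)} := ⟨_, rfl⟩
  rw [← hH'] at hext
  have hxyne : x ≠ y := G.ne_of_adj hxy
  have hynadj : ∀ u, ¬ H.Adj y u := by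
    intro u h
    apply hy
    simp only [supportF, Finset.mem_filter, Finset.mem_univ, true_and]
    exact ⟨u, h⟩
  have hnadj : ¬ H.Adj x y := fun h => hynadj x h.symm
  have hadj' : ∀ u v, H'.Adj u v ↔ H.Adj u v ∨ (u = x ∧ v = y) ∨ (u = y ∧ v = x) := by
    intro u v
    rw [hH', SimpleGraph.sup_adj, SimpleGraph.fromEdgeSet_adj, Set.mem_singleton_iff,
      Sym2.eq_iff]
    constructor
    · rintro (h | ⟨(⟨h1, h2⟩ | ⟨h1, h2⟩), _⟩)
      · exact Or.inl h
      · exact Or.inr (Or.inl ⟨h1, h2⟩)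
      · exact Or.inr (Or.inr ⟨h1, h2⟩)
    · rintro (h | ⟨rfl, rfl⟩ | ⟨rfl, rfl⟩)
      · exact Or.inl h
      · exact Or.inr ⟨Or.inl ⟨rfl, rfl⟩, hxyne⟩
      · exact Or.inr ⟨Or.inr ⟨rfl, rfl⟩, hxyne.symm⟩
  have hsupp : supportF H' = insert y (supportF H) := by
    ext v
    simp only [supportF, Finset.mem_filter, Finset.mem_univ, true_and, Finset.mem_insert]
    constructor
    · rintro ⟨u, hu⟩
      rw [hadj'] at hu
      rcases hu with h | ⟨rfl, rfl⟩ | ⟨rfl, rfl⟩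
      · exact Or.inr ⟨u, h⟩
      · right
        simpa only [supportF, Finset.mem_filter, Finset.mem_univ, true_and] using hx
      · exact Or.inl rfl
    · rintro (rfl | ⟨u, hu⟩)
      · exact ⟨x, by rw [hadj']; exact Or.inr (Or.inr ⟨rfl, rfl⟩)⟩
      · exact ⟨u, by rw [hadj']; exact Or.inl hu⟩
  have hdeg_other : ∀ v, v ≠ x → v ≠ y → H'.degree v = H.degree v := by
    intro v hvx hvy
    unfold SimpleGraph.degree
    congr 1
    ext u
    simp only [SimpleGraph.mem_neighborFinset]
    rw [hadj']
    constructor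
    · rintro (h | ⟨h1, h2⟩ | ⟨h1, h2⟩)
      · exact h
      · exact absurd h1 hvx
      · exact absurd h1 hvy
    · exact fun h => Or.inl h
  have hdegx : H'.degree x = H.degree x + 1 := by
    unfold SimpleGraph.degree
    have : H'.neighborFinset x = insert y (H.neighborFinset x) := by
      ext u
      simp only [SimpleGraph.mem_neighborFinset, Finset.mem_insert]
      rw [hadj']
      constructor
      · rintro (h | ⟨h1, h2⟩ | ⟨h1, h2⟩)
        · exact Or.inr h
        · exact Or.inl h2
        · exact absurd h1 hxyne
      · rintro (rfl | h)
        · exact Or.inr (Or.inl ⟨rfl, rfl⟩)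
        · exact Or.inl h
    rw [this, Finset.card_insert_of_notMem (by
      simp only [SimpleGraph.mem_neighborFinset]; exact hnadj)]
  have hdegy : H'.degree y = 1 := by
    unfold SimpleGraph.degree
    have : H'.neighborFinset y = {x} := by
      ext u
      simp only [SimpleGraph.mem_neighborFinset, Finset.mem_singleton]
      rw [hadj']
      constructor
      · rintro (h | ⟨h1, h2⟩ | ⟨h1, h2⟩)
        · exact absurd h (hynadj u)
        · exact absurd h1 hxyne.symm
        · exact h2
      · rintro rfl
        exact Or.inr (Or.inr ⟨rfl, rfl⟩)
    rw [this, Finset.card_singleton]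
  -- sum over subsets of supportF H
  have hsub : ∀ (T : Finset V), T ⊆ supportF H →
      ∑ v ∈ T, ((H'.degree v : ℤ) - 1)
        = ∑ v ∈ T, ((H.degree v : ℤ) - 1) + (if x ∈ T then 1 else 0) := by
    intro T hT
    have hyT : y ∉ T := fun h => hy (hT h)
    by_cases hxT : x ∈ T
    · rw [if_pos hxT, ← Finset.sum_erase_add _ _ hxT,
        ← Finset.sum_erase_add T (fun v => ((H.degree v : ℤ) - 1)) hxT]
      have h1 : ∑ v ∈ T.erase x, ((H'.degree v : ℤ) - 1)
          = ∑ v ∈ T.erase x, ((H.degree v : ℤ) - 1) := by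
        refine Finset.sum_congr rfl (fun v hv => ?_)
        have hvx := Finset.ne_of_mem_erase hv
        have hvy : v ≠ y := fun h => hyT (h ▸ Finset.mem_of_mem_erase hv)
        rw [hdeg_other v hvx hvy]
      rw [h1, hdegx]
      push_cast
      ring
    · rw [if_neg hxT, add_zero]
      refine Finset.sum_congr rfl (fun v hv => ?_)
      have hvx : v ≠ x := fun h => hxT (h ▸ hv)
      have hvy : v ≠ y := fun h => hyT (h ▸ hv)
      rw [hdeg_other v hvx hvy]
  obtain ⟨_, hext2⟩ := hext
  refine ⟨hΔ, fun U hUsub hUcard => ?_⟩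
  have key := hext2 U hUsub hUcard
  -- sum comparison
  have hsum : ∑ v ∈ U ∩ supportF H', ((H'.degree v : ℤ) - 1)
      = ∑ v ∈ U ∩ supportF H, ((H.degree v : ℤ) - 1) + (if x ∈ U then 1 else 0) := by
    have hif : (if x ∈ U ∩ supportF H then (1:ℤ) else 0) = (if x ∈ U then (1:ℤ) else 0) := by
      by_cases h : x ∈ U <;> simp [h, hx]
    rw [hsupp]
    by_cases hyU : y ∈ U
    · have h1 : U ∩ insert y (supportF H) = insert y (U ∩ supportF H) := by
        ext v
        simp only [Finset.mem_inter, Finset.mem_insert]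
        constructor
        · rintro ⟨hv, rfl | hv2⟩
          · exact Or.inl rfl
          · exact Or.inr ⟨hv, hv2⟩
        · rintro (rfl | ⟨hv, hv2⟩)
          · exact ⟨hyU, Or.inl rfl⟩
          · exact ⟨hv, Or.inr hv2⟩
      rw [h1, Finset.sum_insert (by simp [hy]), hdegy,
        hsub (U ∩ supportF H) Finset.inter_subset_right, hif]
      push_cast
      ring
    · have h1 : U ∩ insert y (supportF H) = U ∩ supportF H := by
        ext v
        simp only [Finset.mem_inter, Finset.mem_insert]
        constructor
        · rintro ⟨hv, rfl | hv2⟩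
          · exact absurd hv hyU
          · exact ⟨hv, hv2⟩
        · rintro ⟨hv, hv2⟩
          exact ⟨hv, Or.inr hv2⟩
      rw [h1, hsub (U ∩ supportF H) Finset.inter_subset_right, hif]
  -- cardinality comparison
  have hAsub : extNbhd G U \ supportF H' ⊆ extNbhd G U \ supportF H := by
    rw [hsupp]
    exact Finset.sdiff_subset_sdiff Finset.Subset.rfl (Finset.subset_insert _ _)
  have hcard : ((extNbhd G U \ supportF H').card : ℤ) + (if x ∈ U then 1 else 0)
      ≤ ((extNbhd G U \ supportF H).card : ℤ) := by
    by_cases hxU : x ∈ U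
    · have hyU : y ∉ U := by
        intro hyU
        rcases hbip x y hxy with ⟨hx1, hy2⟩ | ⟨hx2, hy1⟩
        · rcases hUsub with hU | hU
          · exact (Finset.disjoint_left.mp hdisj (hU hyU)) hy2
          · exact (Finset.disjoint_left.mp hdisj hx1) (hU hxU)
        · rcases hUsub with hU | hU
          · exact (Finset.disjoint_left.mp hdisj (hU hxU)) hx2
          · exact (Finset.disjoint_left.mp hdisj hy1) (hU hyU)
      have hymem : y ∈ extNbhd G U \ supportF H := by
        simp only [Finset.mem_sdiff, extNbhd, Finset.mem_filter, Finset.mem_univ, true_and]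
        exact ⟨⟨hyU, ⟨x, hxU, hxy⟩⟩, hy⟩
      have hsub2 : extNbhd G U \ supportF H' ⊆ (extNbhd G U \ supportF H).erase y := by
        intro v hv
        have hv' := hAsub hv
        rw [hsupp] at hv
        simp only [Finset.mem_sdiff, Finset.mem_insert, not_or] at hv
        exact Finset.mem_erase.mpr ⟨hv.2.1, hv'⟩
      have h2 := Finset.card_le_card hsub2
      rw [Finset.card_erase_of_mem hymem] at h2
      have h3 : 1 ≤ (extNbhd G U \ supportF H).card := Finset.card_pos.mpr ⟨y, hymem⟩
      rw [if_pos hxU]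
      have : (extNbhd G U \ supportF H').card + 1 ≤ (extNbhd G U \ supportF H).card := by
        omega
      exact_mod_cast this
    · rw [if_neg hxU, add_zero]
      exact_mod_cast Finset.card_le_card hAsub
  rw [hsum] at key
  by_cases hxU : x ∈ U
  · rw [if_pos hxU] at key hcard
    linarith
  · rw [if_neg hxU] at key hcard
    linarith


theorem stmt_13 {V : Type*} [Fintype V] [DecidableEq V] (G H : SimpleGraph V)
    (V₁ V₂ : Finset V) (D m : ℕ) (hD : 3 ≤ D) (hm : 1 ≤ m)
    (hdisj : Disjoint V₁ V₂) (hunion : V₁ ∪ V₂ = Finset.univ)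
    (hbip : ∀ u v : V, G.Adj u v → (u ∈ V₁ ∧ v ∈ V₂) ∨ (u ∈ V₂ ∧ v ∈ V₁))
    (hHG : H ≤ G) (hΔ : ∀ v, H.degree v ≤ D)
    (x y : V) (hx : x ∈ supportF H) (hy : y ∉ supportF H) (hxy : G.Adj x y)
    (hext : BipExtendable G (H ⊔ SimpleGraph.fromEdgeSet {s(x, y)}) V₁ V₂ D m) :
    BipExtendable G H V₁ V₂ D m :=
  stmt_13_aux G H V₁ V₂ D m hD hm hdisj hbip hHG hΔ x y hx hy hxy hext
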